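/- If G₁ and G₂ are profinite groups in which every closed subgroup has a closed permutable complement, then the same holds in the direct product G₁ × G₂. -/

import Mathlib

open Pointwise

/-- The direct product of two profinite groups in which every closed subgroup has a
closed permutable complement again has this property. -/
theorem stmt4 {G₁ G₂ : Type*} [Group G₁] [TopologicalSpace G₁] [IsTopologicalGroup G₁]
    [CompactSpace G₁] [T2Space G₁] [TotallyDisconnectedSpace G₁]
    [Group G₂] [TopologicalSpace G₂] [IsTopologicalGroup G₂]
    [CompactSpace G₂] [T2Space G₂] [TotallyDisconnectedSpace G₂]
    (h₁ : ∀ H : Subgroup G₁, IsClosed (H : Set G₁) → ∃ K : Subgroup G₁,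
      IsClosed (K : Set G₁) ∧ (H : Set G₁) * (K : Set G₁) = Set.univ ∧ H ⊓ K = ⊥)
    (h₂ : ∀ H : Subgroup G₂, IsClosed (H : Set G₂) → ∃ K : Subgroup G₂,
      IsClosed (K : Set G₂) ∧ (H : Set G₂) * (K : Set G₂) = Set.univ ∧ H ⊓ K = ⊥) :
    ∀ H : Subgroup (G₁ × G₂), IsClosed (H : Set (G₁ × G₂)) → ∃ K : Subgroup (G₁ × G₂),
      IsClosed (K : Set (G₁ × G₂)) ∧
      (H : Set (G₁ × G₂)) * (K : Set (G₁ × G₂)) = Set.univ ∧ H ⊓ K = ⊥ := by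
  intro H hH
  -- A = projection of H to G₁, B = slice {y | (1, y) ∈ H}
  set A : Subgroup G₁ := H.map (MonoidHom.fst G₁ G₂) with hAdef
  set B : Subgroup G₂ := H.comap (MonoidHom.inr G₁ G₂) with hBdef
  have hAc : IsClosed (A : Set G₁) := by
    have h1 : IsCompact (H : Set (G₁ × G₂)) := hH.isCompact
    have h2 : IsCompact (Prod.fst '' (H : Set (G₁ × G₂))) := h1.image continuous_fst
    have heq : (A : Set G₁) = Prod.fst '' (H : Set (G₁ × G₂)) := rfl
    rw [heq]
    exact h2.isClosed
  have hBc : IsClosed (B : Set G₂) := by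
    have : Continuous fun y : G₂ => ((1 : G₁), y) := continuous_const.prodMk continuous_id
    exact hH.preimage this
  obtain ⟨K₁, hK₁c, hK₁mul, hK₁inf⟩ := h₁ A hAc
  obtain ⟨K₂, hK₂c, hK₂mul, hK₂inf⟩ := h₂ B hBc
  refine ⟨K₁.prod K₂, ?_, ?_, ?_⟩
  · rw [Subgroup.coe_prod]
    exact hK₁c.prod hK₂c
  · apply Set.eq_univ_of_forall
    rintro ⟨g₁, g₂⟩
    -- decompose g₁
    have hg₁ : g₁ ∈ (A : Set G₁) * (K₁ : Set G₁) := by rw [hK₁mul]; trivial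
    obtain ⟨a, ha, k₁, hk₁, hak⟩ := hg₁
    obtain ⟨⟨a', x⟩, hxH, hax⟩ := ha
    simp only [MonoidHom.coe_fst] at hax
    subst hax
    have hg₂ : x⁻¹ * g₂ ∈ (B : Set G₂) * (K₂ : Set G₂) := by rw [hK₂mul]; trivial
    obtain ⟨b, hb, k₂, hk₂, hbk⟩ := hg₂
    have hbH : ((1 : G₁), b) ∈ H := hb
    have hmem : (a', x * b) ∈ H := by
      have := H.mul_mem hxH hbH
      simpa using this
    refine ⟨(a', x * b), hmem, (k₁, k₂), ⟨hk₁, hk₂⟩, ?_⟩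
    have hbk' : b * k₂ = x⁻¹ * g₂ := hbk
    have : x * b * k₂ = g₂ := by
      rw [mul_assoc, hbk']
      group
    simp [Prod.ext_iff, hak, this]
  · rw [eq_bot_iff]
    rintro ⟨k₁, k₂⟩ ⟨hmemH, hk₁, hk₂⟩
    have hk₁A : k₁ ∈ A := ⟨(k₁, k₂), hmemH, rfl⟩
    have hk₁1 : k₁ = 1 := by
      have : k₁ ∈ A ⊓ K₁ := ⟨hk₁A, hk₁⟩
      rwa [hK₁inf, Subgroup.mem_bot] at this
    subst hk₁1
    have hk₂B : k₂ ∈ B := hmemH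
    have hk₂1 : k₂ = 1 := by
      have : k₂ ∈ B ⊓ K₂ := ⟨hk₂B, hk₂⟩
      rwa [hK₂inf, Subgroup.mem_bot] at this
    subst hk₂1
    rfl
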